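/- The set {q > 0 : κ(q) ≤ 0} equals the interval [2,3], where κ(q) = (4√π/3)·Γ(q-3/2)/Γ(q-3) (interpreted as 0 at the poles of Γ in the denominator). -/

import Mathlib

/-- The integrand of `κ(q)`. -/
noncomputable def kappaIntegrand (q x : ℝ) : ℝ :=
  (x ^ q - 1 + q * (1 - x) + (1 - x) ^ q) * (x * (1 - x)) ^ (-(5 / 2) : ℝ)

/-- `κ(q) = -(8/3)q + ∫_{1/2}^1 (x^q - 1 + q(1-x) + (1-x)^q)·(x(1-x))^{-5/2} dx`,
which takes values in `(-∞,∞]`: the integrand is nonnegative near `1`, and the integral is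
infinite exactly when it fails to be integrable. -/
noncomputable def kappa (q : ℝ) : ℝ :=
  -(8 / 3) * q + ∫ x in (1 / 2 : ℝ)..1, kappaIntegrand q x

open Real MeasureTheory Set intervalIntegral

/-- The reference function `x^{-5/2}(1-x)^{-1/2}`. -/
noncomputable def baseFn (x : ℝ) : ℝ := x ^ (-(5/2) : ℝ) * (1 - x) ^ (-(1/2) : ℝ)

lemma sub_rpow_intable {r : ℝ} (hr : -1 < r) :
    IntervalIntegrable (fun x : ℝ => (1 - x) ^ r) volume (1/2) 1 := by
  have h := (intervalIntegral.intervalIntegrable_rpow' (a := 0) (b := 1/2) hr).comp_sub_left 1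
  norm_num at h
  exact h.symm

lemma baseFn_intable : IntervalIntegrable baseFn volume (1/2) 1 := by
  rw [intervalIntegrable_iff_integrableOn_Ioo_of_le (by norm_num)]
  have h := sub_rpow_intable (r := -(1/2)) (by norm_num)
  rw [intervalIntegrable_iff_integrableOn_Ioo_of_le (by norm_num)] at h
  have hm : Measurable baseFn := by unfold baseFn; fun_prop
  apply Integrable.mono (h.const_mul 8) hm.aestronglyMeasurable
  filter_upwards [ae_restrict_mem measurableSet_Ioo] with x hx
  obtain ⟨hx1, hx2⟩ := hx
  have hx0 : (0:ℝ) < x := by linarith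
  have h1x : (0:ℝ) < 1 - x := by linarith
  have hbound : x ^ (-(5/2):ℝ) ≤ 8 := by
    have h1 : x ^ (-(5/2):ℝ) ≤ x ^ (-3:ℝ) :=
      Real.rpow_le_rpow_of_exponent_ge hx0 hx2.le (by norm_num)
    have h2 : x ^ (-3:ℝ) = (x ^ (3:ℕ))⁻¹ := by
      rw [show (-3:ℝ) = -((3:ℕ):ℝ) by norm_num, Real.rpow_neg hx0.le, Real.rpow_natCast]
    have h3 : (8:ℝ)⁻¹ ≤ x ^ (3:ℕ) := by
      calc (8:ℝ)⁻¹ = (1/2:ℝ)^(3:ℕ) := by norm_num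
        _ ≤ x ^ (3:ℕ) := pow_le_pow_left₀ (by norm_num) hx1.le 3
    have h4 : (x ^ (3:ℕ))⁻¹ ≤ ((8:ℝ)⁻¹)⁻¹ := inv_anti₀ (by norm_num) h3
    refine h1.trans ?_
    rw [h2]
    simpa using h4
  have hb0 : (0:ℝ) ≤ (1-x) ^ (-(1/2):ℝ) := Real.rpow_nonneg h1x.le _
  simp only [baseFn, Real.norm_eq_abs]
  rw [abs_of_nonneg (mul_nonneg (Real.rpow_nonneg hx0.le _) hb0), abs_of_nonneg (by positivity)]
  exact mul_le_mul_of_nonneg_right hbound hb0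

/-- An antiderivative of `baseFn` on `(1/2, 1)`. -/
noncomputable def Fa (x : ℝ) : ℝ :=
  (1 - x) ^ ((1/2):ℝ) * (-(2/3) * x ^ (-(3/2):ℝ) - 4/3 * x ^ (-(1/2):ℝ))

lemma Fa_deriv {x : ℝ} (hx : x ∈ Ioo (1/2:ℝ) 1) : HasDerivAt Fa (baseFn x) x := by
  obtain ⟨hx1, hx2⟩ := hx
  have hx0 : (0:ℝ) < x := by linarith
  have h1x : (0:ℝ) < 1 - x := by linarith
  have hu : HasDerivAt (fun y : ℝ => (1 - y) ^ ((1/2):ℝ))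
      (-(1/2) * (1-x) ^ (-(1/2):ℝ)) x := by
    have h := ((hasDerivAt_id x).const_sub 1).rpow_const (p := ((1/2):ℝ)) (Or.inl h1x.ne')
    simp only [id_eq] at h
    convert h using 1
    rw [show ((1/2):ℝ) - 1 = (-(1/2):ℝ) by norm_num]
    ring
  have hv : HasDerivAt (fun y : ℝ => -(2/3) * y ^ (-(3/2):ℝ) - 4/3 * y ^ (-(1/2):ℝ))
      (-(2/3) * (-(3/2) * x ^ (-(5/2):ℝ)) - 4/3 * (-(1/2) * x ^ (-(3/2):ℝ))) x := by
    have h1 := Real.hasDerivAt_rpow_const (x := x) (p := (-(3/2):ℝ)) (Or.inl hx0.ne')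
    have h2 := Real.hasDerivAt_rpow_const (x := x) (p := (-(1/2):ℝ)) (Or.inl hx0.ne')
    have h := (h1.const_mul (-(2/3):ℝ)).sub (h2.const_mul ((4/3):ℝ))
    rw [show (-(3/2):ℝ) - 1 = (-(5/2):ℝ) by norm_num,
      show (-(1/2):ℝ) - 1 = (-(3/2):ℝ) by norm_num] at h
    exact h
  have hF : HasDerivAt Fa
      ((-(1/2) * (1-x) ^ (-(1/2):ℝ)) * (-(2/3) * x ^ (-(3/2):ℝ) - 4/3 * x ^ (-(1/2):ℝ)) +
        (1 - x) ^ ((1/2):ℝ) *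
          (-(2/3) * (-(3/2) * x ^ (-(5/2):ℝ)) - 4/3 * (-(1/2) * x ^ (-(3/2):ℝ)))) x :=
    hu.mul hv
  convert hF using 1
  have hA : (1-x) ^ ((1/2):ℝ) = (1-x) * (1-x) ^ (-(1/2):ℝ) := by
    rw [← Real.rpow_one_add' h1x.le (by norm_num)]
    norm_num
  have hB : x * x ^ (-(5/2):ℝ) = x ^ (-(3/2):ℝ) := by
    rw [← Real.rpow_one_add' hx0.le (by norm_num)]
    norm_num
  have hC : x * x ^ (-(3/2):ℝ) = x ^ (-(1/2):ℝ) := by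
    rw [← Real.rpow_one_add' hx0.le (by norm_num)]
    norm_num
  unfold baseFn
  linear_combination (-(x ^ (-(5/2):ℝ)) - (2/3) * x ^ (-(3/2):ℝ)) * hA +
    (1-x) ^ (-(1/2):ℝ) * hB + (2/3) * (1-x) ^ (-(1/2):ℝ) * hC

lemma baseFn_integral : ∫ x in (1/2:ℝ)..1, baseFn x = 8/3 := by
  have hFc : ∀ y : ℝ, y ≠ 0 → ContinuousAt Fa y := by
    intro y hy
    show ContinuousAt
      (fun x : ℝ => (1 - x) ^ ((1/2):ℝ) * (-(2/3) * x ^ (-(3/2):ℝ) - 4/3 * x ^ (-(1/2):ℝ))) y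
    apply ContinuousAt.mul
    · exact (continuousAt_const.sub continuousAt_id).rpow_const (Or.inr (by norm_num))
    · exact (continuousAt_const.mul (continuousAt_id.rpow_const (Or.inl hy))).sub
        (continuousAt_const.mul (continuousAt_id.rpow_const (Or.inl hy)))
  have ha : Filter.Tendsto Fa (nhdsWithin (1/2) (Ioi (1/2))) (nhds (Fa (1/2))) :=
    ((hFc (1/2) (by norm_num)).tendsto).mono_left nhdsWithin_le_nhds
  have hb : Filter.Tendsto Fa (nhdsWithin 1 (Iio 1)) (nhds (Fa 1)) :=
    ((hFc 1 (by norm_num)).tendsto).mono_left nhdsWithin_le_nhds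
  have h := intervalIntegral.integral_eq_sub_of_hasDerivAt_of_tendsto (a := (1/2:ℝ)) (b := 1)
    (f := Fa) (f' := baseFn) (by norm_num) (fun x hx => Fa_deriv hx) baseFn_intable ha hb
  rw [h]
  have hFa1 : Fa 1 = 0 := by
    unfold Fa
    norm_num
  have hFahalf : Fa (1/2) = -(8/3) := by
    have e1 : ((1:ℝ)/2) ^ ((1/2):ℝ) * ((1:ℝ)/2) ^ (-(3/2):ℝ) = 2 := by
      rw [← Real.rpow_add (by norm_num)]
      norm_num [Real.rpow_neg_one]
    have e2 : ((1:ℝ)/2) ^ ((1/2):ℝ) * ((1:ℝ)/2) ^ (-(1/2):ℝ) = 1 := by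
      rw [← Real.rpow_add (by norm_num)]
      norm_num
    have expand : Fa (1/2) = -(2/3) * (((1:ℝ)/2) ^ ((1/2):ℝ) * ((1:ℝ)/2) ^ (-(3/2):ℝ)) -
        4/3 * (((1:ℝ)/2) ^ ((1/2):ℝ) * ((1:ℝ)/2) ^ (-(1/2):ℝ)) := by
      unfold Fa
      ring
    rw [expand, e1, e2]
    norm_num
  rw [hFa1, hFahalf]
  norm_num

lemma intervalIntegral_eq_Ioo (f : ℝ → ℝ) :
    ∫ x in (1/2:ℝ)..1, f x = ∫ x in Ioo (1/2:ℝ) 1, f x := by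
  rw [intervalIntegral.integral_of_le (by norm_num), integral_Ioc_eq_integral_Ioo]

lemma kappaIntegrand_two {x : ℝ} (hx : x ∈ Ioo (1/2:ℝ) 1) :
    kappaIntegrand 2 x = 2 * baseFn x := by
  obtain ⟨hx1, hx2⟩ := hx
  have hx0 : (0:ℝ) < x := by linarith
  have h1x : (0:ℝ) < 1 - x := by linarith
  unfold kappaIntegrand baseFn
  rw [Real.rpow_two, Real.rpow_two, Real.mul_rpow hx0.le h1x.le]
  have key : (1-x)^(2:ℕ) * (1-x)^(-(5/2):ℝ) = (1-x)^(-(1/2):ℝ) := by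
    rw [← Real.rpow_natCast (1-x) 2, ← Real.rpow_add h1x]
    norm_num
  calc (x ^ 2 - 1 + 2 * (1 - x) + (1 - x) ^ 2) * (x ^ (-(5/2):ℝ) * (1 - x) ^ (-(5/2):ℝ))
      = 2 * (x ^ (-(5/2):ℝ) * ((1-x)^(2:ℕ) * (1-x)^(-(5/2):ℝ))) := by ring
    _ = 2 * (x ^ (-(5/2):ℝ) * (1 - x) ^ (-(1/2):ℝ)) := by rw [key]

lemma kappaIntegrand_three {x : ℝ} (hx : x ∈ Ioo (1/2:ℝ) 1) :
    kappaIntegrand 3 x = 3 * baseFn x := by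
  obtain ⟨hx1, hx2⟩ := hx
  have hx0 : (0:ℝ) < x := by linarith
  have h1x : (0:ℝ) < 1 - x := by linarith
  unfold kappaIntegrand baseFn
  rw [show (3:ℝ) = ((3:ℕ):ℝ) by norm_num, Real.rpow_natCast, Real.rpow_natCast,
    Real.mul_rpow hx0.le h1x.le]
  have key : (1-x)^(2:ℕ) * (1-x)^(-(5/2):ℝ) = (1-x)^(-(1/2):ℝ) := by
    rw [← Real.rpow_natCast (1-x) 2, ← Real.rpow_add h1x]
    norm_num
  calc (x ^ (3:ℕ) - 1 + ((3:ℕ):ℝ) * (1 - x) + (1 - x) ^ (3:ℕ)) *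
        (x ^ (-(5/2):ℝ) * (1 - x) ^ (-(5/2):ℝ))
      = 3 * (x ^ (-(5/2):ℝ) * ((1-x)^(2:ℕ) * (1-x)^(-(5/2):ℝ))) := by push_cast; ring
    _ = 3 * (x ^ (-(5/2):ℝ) * (1 - x) ^ (-(1/2):ℝ)) := by rw [key]

lemma kappaIntegrand_meas (q : ℝ) : Measurable (kappaIntegrand q) := by
  unfold kappaIntegrand
  fun_prop

lemma kappaIntegrand_two_intable : IntervalIntegrable (kappaIntegrand 2) volume (1/2) 1 := by
  rw [intervalIntegrable_iff_integrableOn_Ioo_of_le (by norm_num)]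
  have h := baseFn_intable.const_mul 2
  rw [intervalIntegrable_iff_integrableOn_Ioo_of_le (by norm_num)] at h
  exact h.congr_fun (fun x hx => (kappaIntegrand_two hx).symm) measurableSet_Ioo

lemma kappaIntegrand_three_intable : IntervalIntegrable (kappaIntegrand 3) volume (1/2) 1 := by
  rw [intervalIntegrable_iff_integrableOn_Ioo_of_le (by norm_num)]
  have h := baseFn_intable.const_mul 3
  rw [intervalIntegrable_iff_integrableOn_Ioo_of_le (by norm_num)] at h
  exact h.congr_fun (fun x hx => (kappaIntegrand_three hx).symm) measurableSet_Ioo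

lemma integral_two : ∫ x in (1/2:ℝ)..1, kappaIntegrand 2 x = 16/3 := by
  calc ∫ x in (1/2:ℝ)..1, kappaIntegrand 2 x
      = ∫ x in Ioo (1/2:ℝ) 1, kappaIntegrand 2 x := intervalIntegral_eq_Ioo _
    _ = ∫ x in Ioo (1/2:ℝ) 1, 2 * baseFn x :=
        setIntegral_congr_fun measurableSet_Ioo (fun x hx => kappaIntegrand_two hx)
    _ = ∫ x in (1/2:ℝ)..1, 2 * baseFn x := (intervalIntegral_eq_Ioo _).symm
    _ = 2 * ∫ x in (1/2:ℝ)..1, baseFn x := intervalIntegral.integral_const_mul _ _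
    _ = 16/3 := by rw [baseFn_integral]; norm_num

lemma integral_three : ∫ x in (1/2:ℝ)..1, kappaIntegrand 3 x = 8 := by
  calc ∫ x in (1/2:ℝ)..1, kappaIntegrand 3 x
      = ∫ x in Ioo (1/2:ℝ) 1, kappaIntegrand 3 x := intervalIntegral_eq_Ioo _
    _ = ∫ x in Ioo (1/2:ℝ) 1, 3 * baseFn x :=
        setIntegral_congr_fun measurableSet_Ioo (fun x hx => kappaIntegrand_three hx)
    _ = ∫ x in (1/2:ℝ)..1, 3 * baseFn x := (intervalIntegral_eq_Ioo _).symm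
    _ = 3 * ∫ x in (1/2:ℝ)..1, baseFn x := intervalIntegral.integral_const_mul _ _
    _ = 8 := by rw [baseFn_integral]; norm_num

/-- convexity of `c ^ ·` -/
lemma rpow_comb_le {c : ℝ} (hc : 0 < c) {a b s t : ℝ} (hs : 0 ≤ s) (ht : 0 ≤ t)
    (hst : s + t = 1) : c ^ (s * a + t * b) ≤ s * c ^ a + t * c ^ b := by
  rw [Real.rpow_def_of_pos hc, Real.rpow_def_of_pos hc, Real.rpow_def_of_pos hc]
  have h := convexOn_exp.2 (Set.mem_univ (Real.log c * a)) (Set.mem_univ (Real.log c * b))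
    hs ht hst
  simp only [smul_eq_mul] at h
  calc Real.exp (Real.log c * (s * a + t * b))
      = Real.exp (s * (Real.log c * a) + t * (Real.log c * b)) := by ring_nf
    _ ≤ s * Real.exp (Real.log c * a) + t * Real.exp (Real.log c * b) := h

lemma rpow_comb_lt {c : ℝ} (hc : 0 < c) (hc1 : c ≠ 1) {a b s t : ℝ} (hs : 0 < s) (ht : 0 < t)
    (hst : s + t = 1) (hab : a ≠ b) : c ^ (s * a + t * b) < s * c ^ a + t * c ^ b := by
  rw [Real.rpow_def_of_pos hc, Real.rpow_def_of_pos hc, Real.rpow_def_of_pos hc]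
  have hlog : Real.log c ≠ 0 := Real.log_ne_zero_of_pos_of_ne_one hc hc1
  have hne : Real.log c * a ≠ Real.log c * b := by
    intro h
    exact hab (mul_left_cancel₀ hlog h)
  have h := strictConvexOn_exp.2 (Set.mem_univ (Real.log c * a))
    (Set.mem_univ (Real.log c * b)) hne hs ht hst
  simp only [smul_eq_mul] at h
  calc Real.exp (Real.log c * (s * a + t * b))
      = Real.exp (s * (Real.log c * a) + t * (Real.log c * b)) := by ring_nf
    _ < s * Real.exp (Real.log c * a) + t * Real.exp (Real.log c * b) := h

lemma kappaIntegrand_comb_le {x : ℝ} (hx : x ∈ Ioo (1/2:ℝ) 1) {a b s t : ℝ}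
    (hs : 0 ≤ s) (ht : 0 ≤ t) (hst : s + t = 1) :
    kappaIntegrand (s * a + t * b) x ≤ s * kappaIntegrand a x + t * kappaIntegrand b x := by
  obtain ⟨hx1, hx2⟩ := hx
  have hx0 : (0:ℝ) < x := by linarith
  have h1x : (0:ℝ) < 1 - x := by linarith
  have hw : 0 ≤ (x * (1-x)) ^ (-(5/2):ℝ) := Real.rpow_nonneg (by nlinarith) _
  have h1 := rpow_comb_le hx0 hs ht hst (a := a) (b := b)
  have h2 := rpow_comb_le h1x hs ht hst (a := a) (b := b)
  unfold kappaIntegrand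
  have hnum : x ^ (s*a+t*b) - 1 + (s*a+t*b)*(1-x) + (1-x)^(s*a+t*b)
      ≤ s * (x^a - 1 + a*(1-x) + (1-x)^a) + t * (x^b - 1 + b*(1-x) + (1-x)^b) := by
    nlinarith [h1, h2]
  calc (x ^ (s*a+t*b) - 1 + (s*a+t*b)*(1-x) + (1-x)^(s*a+t*b)) * (x * (1-x)) ^ (-(5/2):ℝ)
      ≤ (s * (x^a - 1 + a*(1-x) + (1-x)^a) + t * (x^b - 1 + b*(1-x) + (1-x)^b)) *
        (x * (1-x)) ^ (-(5/2):ℝ) := mul_le_mul_of_nonneg_right hnum hw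
    _ = s * ((x^a - 1 + a*(1-x) + (1-x)^a) * (x * (1-x)) ^ (-(5/2):ℝ)) +
        t * ((x^b - 1 + b*(1-x) + (1-x)^b) * (x * (1-x)) ^ (-(5/2):ℝ)) := by ring

lemma kappaIntegrand_comb_lt {x : ℝ} (hx : x ∈ Ioo (1/2:ℝ) 1) {a b s t : ℝ}
    (hs : 0 < s) (ht : 0 < t) (hst : s + t = 1) (hab : a ≠ b) :
    kappaIntegrand (s * a + t * b) x < s * kappaIntegrand a x + t * kappaIntegrand b x := by
  obtain ⟨hx1, hx2⟩ := hx
  have hx0 : (0:ℝ) < x := by linarith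
  have h1x : (0:ℝ) < 1 - x := by linarith
  have hw : 0 < (x * (1-x)) ^ (-(5/2):ℝ) := Real.rpow_pos_of_pos (by nlinarith) _
  have h1 := rpow_comb_lt hx0 hx2.ne hs ht hst hab (a := a) (b := b)
  have h2 := rpow_comb_le h1x hs.le ht.le hst (a := a) (b := b)
  unfold kappaIntegrand
  have hnum : x ^ (s*a+t*b) - 1 + (s*a+t*b)*(1-x) + (1-x)^(s*a+t*b)
      < s * (x^a - 1 + a*(1-x) + (1-x)^a) + t * (x^b - 1 + b*(1-x) + (1-x)^b) := by
    nlinarith [h1, h2]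
  calc (x ^ (s*a+t*b) - 1 + (s*a+t*b)*(1-x) + (1-x)^(s*a+t*b)) * (x * (1-x)) ^ (-(5/2):ℝ)
      < (s * (x^a - 1 + a*(1-x) + (1-x)^a) + t * (x^b - 1 + b*(1-x) + (1-x)^b)) *
        (x * (1-x)) ^ (-(5/2):ℝ) := mul_lt_mul_of_pos_right hnum hw
    _ = s * ((x^a - 1 + a*(1-x) + (1-x)^a) * (x * (1-x)) ^ (-(5/2):ℝ)) +
        t * ((x^b - 1 + b*(1-x) + (1-x)^b) * (x * (1-x)) ^ (-(5/2):ℝ)) := by ring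

lemma kappaIntegrand_nonneg {q : ℝ} (hq : 0 < q) {x : ℝ} (hx : x ∈ Ioo (1/2:ℝ) 1) :
    0 ≤ kappaIntegrand q x := by
  obtain ⟨hx1, hx2⟩ := hx
  have hx0 : (0:ℝ) < x := by linarith
  have h1x : (0:ℝ) < 1 - x := by linarith
  have hw : 0 ≤ (x * (1-x)) ^ (-(5/2):ℝ) := Real.rpow_nonneg (by nlinarith) _
  have h1xq : (0:ℝ) ≤ (1-x)^q := Real.rpow_nonneg h1x.le q
  rcases le_total 1 q with h1 | h1
  · have hb : 1 + q * (x - 1) ≤ x ^ q := by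
      have := one_add_mul_self_le_rpow_one_add (s := x - 1) (by linarith) h1
      simpa using this
    exact mul_nonneg (by nlinarith) hw
  · have hxq : x ≤ x ^ q := by
      calc x = x ^ (1:ℝ) := (Real.rpow_one x).symm
        _ ≤ x ^ q := Real.rpow_le_rpow_of_exponent_ge hx0 hx2.le h1
    have h1xq' : (1-x) ≤ (1-x) ^ q := by
      calc (1-x) = (1-x) ^ (1:ℝ) := (Real.rpow_one _).symm
        _ ≤ (1-x) ^ q := Real.rpow_le_rpow_of_exponent_ge h1x (by linarith) h1
    exact mul_nonneg (by nlinarith) hw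

lemma kappaIntegrand_intable_of_mem {q : ℝ} (h2 : 2 ≤ q) (h3 : q ≤ 3) :
    IntervalIntegrable (kappaIntegrand q) volume (1/2) 1 := by
  rw [intervalIntegrable_iff_integrableOn_Ioo_of_le (by norm_num)]
  have hbase := baseFn_intable.const_mul q
  rw [intervalIntegrable_iff_integrableOn_Ioo_of_le (by norm_num)] at hbase
  have hm : Measurable (kappaIntegrand q) := kappaIntegrand_meas q
  apply Integrable.mono hbase hm.aestronglyMeasurable
  filter_upwards [ae_restrict_mem measurableSet_Ioo] with x hx
  have hnn := kappaIntegrand_nonneg (by linarith : (0:ℝ) < q) hx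
  have hb0 : 0 ≤ baseFn x := by
    obtain ⟨hx1, hx2⟩ := hx
    exact mul_nonneg (Real.rpow_nonneg (by linarith) _) (Real.rpow_nonneg (by linarith) _)
  have hcomb := kappaIntegrand_comb_le hx (a := 2) (b := 3) (s := 3 - q) (t := q - 2)
    (by linarith) (by linarith) (by ring)
  rw [show (3 - q) * 2 + (q - 2) * 3 = q by ring, kappaIntegrand_two hx,
    kappaIntegrand_three hx] at hcomb
  rw [Real.norm_eq_abs, Real.norm_eq_abs, abs_of_nonneg hnn,
    abs_of_nonneg (mul_nonneg (by linarith) hb0)]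
  nlinarith [hcomb, hb0]

lemma kappa_nonpos {q : ℝ} (h2 : 2 ≤ q) (h3 : q ≤ 3) : kappa q ≤ 0 := by
  have hintq := kappaIntegrand_intable_of_mem h2 h3
  have hint2 := kappaIntegrand_two_intable
  have hint3 := kappaIntegrand_three_intable
  rw [intervalIntegrable_iff_integrableOn_Ioo_of_le (by norm_num)] at hintq hint2 hint3
  have key : ∫ x in (1/2:ℝ)..1, kappaIntegrand q x ≤ 8/3 * q := by
    have hmono : ∫ x in Ioo (1/2:ℝ) 1, kappaIntegrand q x ≤
        ∫ x in Ioo (1/2:ℝ) 1, ((3 - q) * kappaIntegrand 2 x + (q - 2) * kappaIntegrand 3 x) := by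
      apply setIntegral_mono_on hintq ((hint2.const_mul (3 - q)).add (hint3.const_mul (q - 2)))
        measurableSet_Ioo
      intro x hx
      have hcomb := kappaIntegrand_comb_le hx (a := 2) (b := 3) (s := 3 - q) (t := q - 2)
        (by linarith) (by linarith) (by ring)
      rwa [show (3 - q) * 2 + (q - 2) * 3 = q by ring] at hcomb
    have hval : ∫ x in Ioo (1/2:ℝ) 1, ((3 - q) * kappaIntegrand 2 x +
        (q - 2) * kappaIntegrand 3 x) = (3 - q) * (16/3) + (q - 2) * 8 := by
      rw [MeasureTheory.integral_add (hint2.const_mul (3 - q)) (hint3.const_mul (q - 2)),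
        MeasureTheory.integral_const_mul, MeasureTheory.integral_const_mul,
        ← intervalIntegral_eq_Ioo, ← intervalIntegral_eq_Ioo, integral_two, integral_three]
    rw [intervalIntegral_eq_Ioo]
    rw [hval] at hmono
    linarith
  unfold kappa
  linarith

lemma kappa_pos_left {q : ℝ} (h1 : 3/2 < q) (h2 : q < 2)
    (hint : IntervalIntegrable (kappaIntegrand q) volume (1/2) 1) : 0 < kappa q := by
  have h3q : (0:ℝ) < 3 - q := by linarith
  set s := 1/(3-q) with hs
  set t := (2-q)/(3-q) with ht
  have hs0 : 0 < s := by rw [hs]; exact div_pos one_pos h3q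
  have ht0 : 0 < t := by rw [ht]; exact div_pos (by linarith) h3q
  have hst : s + t = 1 := by rw [hs, ht]; field_simp; ring
  have hq2 : s * q + t * 3 = 2 := by rw [hs, ht]; field_simp; ring
  have hpos : ∀ x ∈ Ioo (1/2:ℝ) 1,
      0 < s * kappaIntegrand q x + t * kappaIntegrand 3 x - kappaIntegrand 2 x := by
    intro x hx
    have h := kappaIntegrand_comb_lt hx hs0 ht0 hst (a := q) (b := 3) (by linarith)
    rw [hq2] at h
    linarith
  have hii : IntervalIntegrable
      (fun x => s * kappaIntegrand q x + t * kappaIntegrand 3 x - kappaIntegrand 2 x)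
      volume (1/2) 1 :=
    ((hint.const_mul s).add (kappaIntegrand_three_intable.const_mul t)).sub
      kappaIntegrand_two_intable
  have hI := intervalIntegral_pos_of_pos_on hii hpos (by norm_num)
  rw [intervalIntegral.integral_sub ((hint.const_mul s).add
      (kappaIntegrand_three_intable.const_mul t)) kappaIntegrand_two_intable,
    intervalIntegral.integral_add (hint.const_mul s)
      (kappaIntegrand_three_intable.const_mul t),
    intervalIntegral.integral_const_mul, intervalIntegral.integral_const_mul,
    integral_two, integral_three] at hI
  set I := ∫ x in (1/2:ℝ)..1, kappaIntegrand q x with hIdef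
  have hmul := mul_pos hI h3q
  have expand : (s * I + t * 8 - 16/3) * (3 - q) = I + 8 * (2 - q) - 16/3 * (3 - q) := by
    rw [hs, ht]
    field_simp
  rw [expand] at hmul
  unfold kappa
  rw [← hIdef]
  linarith

lemma kappa_pos_right {q : ℝ} (h3 : 3 < q)
    (hint : IntervalIntegrable (kappaIntegrand q) volume (1/2) 1) : 0 < kappa q := by
  have hq2 : (0:ℝ) < q - 2 := by linarith
  set s := (q-3)/(q-2) with hs
  set t := 1/(q-2) with ht
  have hs0 : 0 < s := by rw [hs]; exact div_pos (by linarith) hq2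
  have ht0 : 0 < t := by rw [ht]; exact div_pos one_pos hq2
  have hst : s + t = 1 := by rw [hs, ht]; field_simp; ring
  have hq3 : s * 2 + t * q = 3 := by rw [hs, ht]; field_simp; ring
  have hpos : ∀ x ∈ Ioo (1/2:ℝ) 1,
      0 < s * kappaIntegrand 2 x + t * kappaIntegrand q x - kappaIntegrand 3 x := by
    intro x hx
    have h := kappaIntegrand_comb_lt hx hs0 ht0 hst (a := 2) (b := q) (by linarith)
    rw [hq3] at h
    linarith
  have hii : IntervalIntegrable
      (fun x => s * kappaIntegrand 2 x + t * kappaIntegrand q x - kappaIntegrand 3 x)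
      volume (1/2) 1 :=
    ((kappaIntegrand_two_intable.const_mul s).add (hint.const_mul t)).sub
      kappaIntegrand_three_intable
  have hI := intervalIntegral_pos_of_pos_on hii hpos (by norm_num)
  rw [intervalIntegral.integral_sub ((kappaIntegrand_two_intable.const_mul s).add
      (hint.const_mul t)) kappaIntegrand_three_intable,
    intervalIntegral.integral_add (kappaIntegrand_two_intable.const_mul s)
      (hint.const_mul t),
    intervalIntegral.integral_const_mul, intervalIntegral.integral_const_mul,
    integral_two, integral_three] at hI
  set I := ∫ x in (1/2:ℝ)..1, kappaIntegrand q x with hIdef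
  have hmul := mul_pos hI hq2
  have expand : (s * (16/3) + t * I - 8) * (q - 2) = 16/3 * (q - 3) + I - 8 * (q - 2) := by
    rw [hs, ht]
    field_simp
  rw [expand] at hmul
  unfold kappa
  rw [← hIdef]
  linarith

lemma not_intable {q : ℝ} (hq0 : 0 < q) (hq : q ≤ 3/2)
    (h : IntervalIntegrable (kappaIntegrand q) volume (1/2) 1) : False := by
  have hlow : ∀ x ∈ Ioo (1/2:ℝ) 1, min q 1 * (1-x) ^ (q - 5/2) ≤ kappaIntegrand q x := by
    intro x hx
    obtain ⟨hx1, hx2⟩ := hx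
    have hx0 : (0:ℝ) < x := by linarith
    have h1x : (0:ℝ) < 1 - x := by linarith
    have h1xq : (0:ℝ) ≤ (1-x)^q := Real.rpow_nonneg h1x.le q
    have hnum : min q 1 * (1-x)^q ≤ x ^ q - 1 + q*(1-x) + (1-x)^q := by
      rcases le_total 1 q with h1 | h1
      · have hb : 1 + q * (x - 1) ≤ x ^ q := by
          have := one_add_mul_self_le_rpow_one_add (s := x - 1) (by linarith) h1
          simpa using this
        rw [min_eq_right h1, one_mul]
        nlinarith
      · have hxq : x ≤ x ^ q := by
          calc x = x ^ (1:ℝ) := (Real.rpow_one x).symm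
            _ ≤ x ^ q := Real.rpow_le_rpow_of_exponent_ge hx0 hx2.le h1
        have h1xq' : (1-x) ≤ (1-x) ^ q := by
          calc (1-x) = (1-x) ^ (1:ℝ) := (Real.rpow_one _).symm
            _ ≤ (1-x) ^ q := Real.rpow_le_rpow_of_exponent_ge h1x (by linarith) h1
        rw [min_eq_left h1]
        have hmm := mul_le_mul_of_nonneg_left h1xq' (show (0:ℝ) ≤ 1 - q by linarith)
        nlinarith
    have hw1 : (1:ℝ) ≤ x ^ (-(5/2):ℝ) :=
      Real.one_le_rpow_of_pos_of_le_one_of_nonpos hx0 hx2.le (by norm_num)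
    have hsplit : (x*(1-x)) ^ (-(5/2):ℝ) = x ^ (-(5/2):ℝ) * (1-x)^(-(5/2):ℝ) :=
      Real.mul_rpow hx0.le h1x.le
    have hwge : (1-x)^(-(5/2):ℝ) ≤ (x*(1-x)) ^ (-(5/2):ℝ) := by
      rw [hsplit]
      exact le_mul_of_one_le_left (Real.rpow_nonneg h1x.le _) hw1
    have hNnn : 0 ≤ x ^ q - 1 + q*(1-x) + (1-x)^q :=
      le_trans (mul_nonneg (le_min hq0.le zero_le_one) h1xq) hnum
    have hstep : (min q 1 * (1-x)^q) * ((1-x)^(-(5/2):ℝ)) ≤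
        (x ^ q - 1 + q*(1-x) + (1-x)^q) * (x*(1-x)) ^ (-(5/2):ℝ) :=
      mul_le_mul hnum hwge (Real.rpow_nonneg h1x.le _) hNnn
    have hcollapse : (min q 1 * (1-x)^q) * ((1-x)^(-(5/2):ℝ)) =
        min q 1 * (1-x) ^ (q - 5/2) := by
      rw [mul_assoc, ← Real.rpow_add h1x, show q + -(5/2:ℝ) = q - 5/2 by ring]
    rw [← hcollapse]
    exact hstep
  rw [intervalIntegrable_iff_integrableOn_Ioo_of_le (by norm_num)] at h
  have hc0 : (0:ℝ) < min q 1 := lt_min hq0 one_pos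
  have hg : IntegrableOn (fun x => min q 1 * (1-x) ^ (q - 5/2)) (Ioo (1/2:ℝ) 1) volume := by
    apply Integrable.mono h ((by fun_prop : Measurable
      (fun x : ℝ => min q 1 * (1-x) ^ (q - 5/2))).aestronglyMeasurable)
    filter_upwards [ae_restrict_mem measurableSet_Ioo] with x hx
    have hlb := hlow x hx
    obtain ⟨hx1, hx2⟩ := hx
    have hnn2 : (0:ℝ) ≤ min q 1 * (1-x) ^ (q - 5/2) :=
      mul_nonneg hc0.le (Real.rpow_nonneg (by linarith) _)
    rw [Real.norm_eq_abs, Real.norm_eq_abs, abs_of_nonneg hnn2,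
      abs_of_nonneg (le_trans hnn2 hlb)]
    exact hlb
  have hg2 : IntegrableOn (fun x => (1-x) ^ (q - 5/2)) (Ioo (1/2:ℝ) 1) volume := by
    have h' := hg.const_mul (min q 1)⁻¹
    have : (fun x => (min q 1)⁻¹ * (min q 1 * (1-x) ^ (q - 5/2))) =
        (fun x => (1-x) ^ (q - 5/2)) := by
      funext x
      rw [← mul_assoc, inv_mul_cancel₀ hc0.ne', one_mul]
    rwa [this] at h'
  rw [← intervalIntegrable_iff_integrableOn_Ioo_of_le (by norm_num)] at hg2
  have h3 := hg2.comp_sub_left 1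
  have heq : (fun x : ℝ => (1 - (1 - x)) ^ (q - 5/2)) = fun x : ℝ => x ^ (q - 5/2) := by
    funext x
    rw [sub_sub_cancel]
  rw [heq] at h3
  norm_num at h3
  replace h3 := h3.symm
  rw [intervalIntegrable_iff_integrableOn_Ioo_of_le (by norm_num)] at h3
  rw [integrableOn_Ioo_rpow_iff (by norm_num)] at h3
  linarith

/-- `{q > 0 : κ(q) ≤ 0} = [2,3]`: the set of `q > 0` where `κ(q)` is finite (the integral
converges) and `≤ 0` is exactly the interval `[2,3]`. -/
theorem kappa_nonpos_set :
    {q : ℝ | 0 < q ∧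
        IntervalIntegrable (kappaIntegrand q) MeasureTheory.volume (1 / 2) 1 ∧
        kappa q ≤ 0}
      = Set.Icc 2 3 := by
  ext q
  simp only [Set.mem_setOf_eq, Set.mem_Icc]
  constructor
  · rintro ⟨hq0, hint, hkappa⟩
    constructor
    · by_contra hcon
      push_neg at hcon
      rcases le_or_gt q (3/2) with h' | h'
      · exact not_intable hq0 h' hint
      · exact absurd hkappa (not_le.mpr (kappa_pos_left h' hcon hint))
    · by_contra hcon
      push_neg at hcon
      exact absurd hkappa (not_le.mpr (kappa_pos_right hcon hint))
  · rintro ⟨h2, h3⟩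
    exact ⟨by linarith, kappaIntegrand_intable_of_mem h2 h3, kappa_nonpos h2 h3⟩
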